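/- arXiv:2208.00456 — 2 statements merged into one kernel-verified Lean document; each statement's English description precedes it below -/
import Mathlib

section
/- Let k₊ > 0 and let a₀, a₁, a₂ ∈ ℝ with a₀ ≥ 0, a₁ > 0 and a₂ ≥ 0. Define f(s) := a₀ + a₁·P(s) + a₂·Q(s) and w₀ := a₁√k₊/√(a₁² + a₂²). Then for every s ∈ ℂ with −w₀ < Im s < √k₊, the value f(s) is not a nonpositive real number, i.e. f(s) ∉ {t ∈ ℝ : t ≤ 0}. -/
open Complex Set

noncomputable section

/-- Principal square root on ℂ via the principal power. -/
def csqrt (z : ℂ) : ℂ := z ^ (1/2 : ℂ)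

def Pf (kp : ℝ) (s : ℂ) : ℂ := csqrt (1 - s ^ 2 / (2 * (kp : ℂ) * Complex.I))

def Qf (kp : ℝ) (s : ℂ) : ℂ :=
  s * Complex.exp (-(Real.pi : ℂ) / 4 * Complex.I) / (Real.sqrt (2 * kp) : ℂ)

lemma csqrt_mul_self {z : ℂ} (hz : z ≠ 0) : csqrt z * csqrt z = z := by
  rw [csqrt, ← Complex.cpow_add _ _ hz]
  norm_num

lemma re_csqrt_nonneg (z : ℂ) : 0 ≤ (csqrt z).re := by
  rcases eq_or_ne z 0 with rfl | hz
  · simp [csqrt, Complex.zero_cpow (by norm_num : (1/2:ℂ) ≠ 0)]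
  · rw [csqrt, Complex.cpow_def_of_ne_zero hz, Complex.exp_re]
    apply mul_nonneg (Real.exp_nonneg _)
    have h1 : (Complex.log z * (1/2)).im = z.arg / 2 := by
      simp [Complex.mul_im, Complex.log_im]
      ring
    rw [h1]
    apply Real.cos_nonneg_of_mem_Icc
    constructor
    · linarith [Complex.neg_pi_lt_arg z]
    · linarith [Complex.arg_le_pi z]

lemma Qf_eq (kp : ℝ) (hkp : 0 < kp) (s : ℂ) :
    Qf kp s = s * (1 - Complex.I) / ((2 * Real.sqrt kp : ℝ) : ℂ) := by
  have h2 : Real.sqrt (2 * kp) = Real.sqrt 2 * Real.sqrt kp := Real.sqrt_mul (by norm_num) _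
  have he : Complex.exp (-(Real.pi : ℂ) / 4 * Complex.I)
      = ((Real.sqrt 2 / 2 : ℝ) : ℂ) * (1 - Complex.I) := by
    rw [Complex.exp_mul_I]
    have : (-(Real.pi : ℂ) / 4) = ((-(Real.pi/4) : ℝ) : ℂ) := by push_cast; ring
    rw [this, ← Complex.ofReal_cos, ← Complex.ofReal_sin]
    rw [Real.cos_neg, Real.sin_neg, Real.cos_pi_div_four, Real.sin_pi_div_four]
    push_cast
    ring
  rw [Qf, he, h2]
  rw [div_eq_mul_inv, div_eq_mul_inv]
  have hs2r : Real.sqrt 2 ≠ 0 := (Real.sqrt_pos.mpr (by norm_num)).ne'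
  have hskr : Real.sqrt kp ≠ 0 := (Real.sqrt_pos.mpr hkp).ne'
  have keyr : (Real.sqrt 2 / 2) * (Real.sqrt 2 * Real.sqrt kp)⁻¹ = (2 * Real.sqrt kp)⁻¹ := by
    field_simp
  have key : ((Real.sqrt 2 : ℂ) / 2) * ((Real.sqrt 2 : ℂ) * (Real.sqrt kp : ℂ))⁻¹
      = ((2:ℂ) * (Real.sqrt kp : ℂ))⁻¹ := by
    exact_mod_cast congrArg (Complex.ofReal ·) keyr
  push_cast
  linear_combination s * (1 - Complex.I) * key

lemma real_contra (kp a0 a1 a2 x y r W p q : ℝ) (hkp : 0 < kp)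
    (ha0 : 0 ≤ a0) (ha1 : 0 < a1) (ha2 : 0 ≤ a2)
    (hr : 0 < r) (hr2 : r ^ 2 = kp) (hW : 0 < W) (hW2 : W ^ 2 = a1 ^ 2 + a2 ^ 2)
    (hy1 : -(a1 * r / W) < y) (hy2 : y < r) (hp : 0 ≤ p)
    (e3 : 2 * r * a1 * q = a2 * (x - y))
    (e4 : 2 * r * a0 + 2 * r * a1 * p + a2 * (x + y) ≤ 0)
    (e1 : kp * (p * p - q * q) = kp - x * y)
    (e2 : 4 * kp * (p * q) = x ^ 2 - y ^ 2) : False := by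
  rcases eq_or_ne x y with hxy | hxy
  · subst hxy
    have hq0 : q = 0 := by
      have h0 : 2 * r * a1 * q = 0 := by rw [e3]; ring
      have h2 : (0:ℝ) < 2 * r * a1 := by positivity
      exact (mul_eq_zero.mp h0).resolve_left h2.ne'
    subst hq0
    have e1' : kp * (p * p) = kp - x * x := by linarith [e1]
    rcases le_or_gt x 0 with hy0 | hy0
    · have h1 : 2 * r * a1 * p ≤ -(2 * a2 * x) := by
        linarith [e4, mul_nonneg hr.le ha0]
      have h2 : (0:ℝ) ≤ 2 * r * a1 * p := by positivity
      have hsq := mul_self_le_mul_self h2 h1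
      have h5 : (-x) * W < a1 * r := by
        have h3 : -x < a1 * r / W := by linarith
        exact (lt_div_iff₀ hW).mp h3
      have h6 : (0:ℝ) ≤ (-x) * W := mul_nonneg (by linarith) hW.le
      have h7 : ((-x) * W) * ((-x) * W) < (a1 * r) * (a1 * r) :=
        mul_self_lt_mul_self h6 h5
      have A1 : a1 ^ 2 * (kp * (p * p)) = a1 ^ 2 * (kp - x * x) := by rw [e1']
      have A2 : (2 * r * a1 * p) * (2 * r * a1 * p) = 4 * (a1 ^ 2 * (kp * (p * p))) := by
        linear_combination (4 * a1 ^ 2 * (p * p)) * hr2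
      have A4 : W ^ 2 * (x * x) = (a1 ^ 2 + a2 ^ 2) * (x * x) := by rw [hW2]
      have A5 : a1 ^ 2 * r ^ 2 = a1 ^ 2 * kp := by rw [hr2]
      nlinarith [hsq, h7, A1, A2, A4, A5]
    · have hp0 : p = 0 := by
        by_contra hne
        have hppos : 0 < p := lt_of_le_of_ne hp (Ne.symm hne)
        have hrp : 0 < r * a1 * p := mul_pos (mul_pos hr ha1) hppos
        have := mul_nonneg hr.le ha0
        have := mul_nonneg ha2 hy0.le
        linarith [e4]
      rw [hp0] at e1'
      nlinarith [e1', hr2, mul_pos hy0 (sub_pos.mpr hy2), mul_pos hr (sub_pos.mpr hy2)]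
  · have h7 : (x - y) * (r * a1 * (x + y) - 2 * kp * p * a2) = 0 := by
      linear_combination 2 * kp * p * e3 - r * a1 * e2
    have h8 : r * a1 * (x + y) = 2 * kp * p * a2 := by
      rcases mul_eq_zero.mp h7 with h | h
      · exact absurd (sub_eq_zero.mp h) hxy
      · linarith
    have hxy0 : 0 ≤ x + y := by
      by_contra hlt
      push_neg at hlt
      have h1 : r * a1 * (x + y) < 0 := mul_neg_of_pos_of_neg (mul_pos hr ha1) hlt
      have h2 : (0:ℝ) ≤ 2 * kp * p * a2 := by positivity
      linarith [h8]
    have hp0 : p = 0 := by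
      by_contra hne
      have hppos : 0 < p := lt_of_le_of_ne hp (Ne.symm hne)
      have hrp : 0 < r * a1 * p := mul_pos (mul_pos hr ha1) hppos
      have := mul_nonneg hr.le ha0
      have := mul_nonneg ha2 hxy0
      linarith [e4]
    rw [hp0] at h8 e1
    have hxy1 : x + y = 0 := by
      have hra : (0:ℝ) < r * a1 := mul_pos hr ha1
      have h9 : r * a1 * (x + y) = 0 := by rw [h8]; ring
      exact (mul_eq_zero.mp h9).resolve_left hra.ne'
    have hxmy : x = -y := by linarith
    rw [hxmy] at e1
    nlinarith [mul_nonneg hkp.le (mul_self_nonneg q), mul_self_nonneg y]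

set_option maxHeartbeats 1000000 in
theorem statement12 (kp a0 a1 a2 : ℝ) (hkp : 0 < kp)
    (ha0 : 0 ≤ a0) (ha1 : 0 < a1) (ha2 : 0 ≤ a2) :
    ∀ s : ℂ,
      -(a1 * Real.sqrt kp / Real.sqrt (a1 ^ 2 + a2 ^ 2)) < s.im → s.im < Real.sqrt kp →
      (a0 : ℂ) + (a1 : ℂ) * Pf kp s + (a2 : ℂ) * Qf kp s ∉ {z : ℂ | z.im = 0 ∧ z.re ≤ 0} := by
  intro s hy1 hy2 hmem
  obtain ⟨him, hre⟩ := hmem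
  have hr : 0 < Real.sqrt kp := Real.sqrt_pos.mpr hkp
  have hr2 : (Real.sqrt kp) ^ 2 = kp := Real.sq_sqrt hkp.le
  have hW : 0 < Real.sqrt (a1 ^ 2 + a2 ^ 2) := Real.sqrt_pos.mpr (by positivity)
  have hW2 : (Real.sqrt (a1 ^ 2 + a2 ^ 2)) ^ 2 = a1 ^ 2 + a2 ^ 2 := Real.sq_sqrt (by positivity)
  set x := s.re with hx
  set y := s.im with hyy
  set r := Real.sqrt kp with hrdef
  set W := Real.sqrt (a1 ^ 2 + a2 ^ 2) with hWdef
  -- z and its real/imaginary parts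
  set z : ℂ := 1 - s ^ 2 / (2 * (kp : ℂ) * Complex.I) with hzdef
  have hkC : ((kp : ℝ) : ℂ) ≠ 0 := Complex.ofReal_ne_zero.mpr hkp.ne'
  have hz_eq : z = 1 + s ^ 2 * Complex.I / ((2 * kp : ℝ) : ℂ) := by
    rw [hzdef]
    have h2k : (2 * (kp : ℂ) * Complex.I) ≠ 0 := by
      simp [Complex.I_ne_zero, hkC]
    push_cast
    field_simp
    linear_combination (-s^2) * Complex.I_sq
  have hzre : z.re = 1 - x * y / kp := by
    rw [hz_eq, Complex.add_re, Complex.one_re, Complex.div_ofReal_re, Complex.mul_I_re,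
      pow_two, Complex.mul_im]
    rw [← hx, ← hyy]
    field_simp
    ring
  have hzim : z.im = (x ^ 2 - y ^ 2) / (2 * kp) := by
    rw [hz_eq, Complex.add_im, Complex.one_im, Complex.div_ofReal_im, Complex.mul_I_im,
      pow_two, Complex.mul_re]
    rw [← hx, ← hyy]
    field_simp
    ring
  have hzne : z ≠ 0 := by
    intro h0
    have h1 : z.re = 0 := by rw [h0]; simp
    have h2 : z.im = 0 := by rw [h0]; simp
    rw [hzre] at h1
    rw [hzim] at h2
    have e1 : x * y = kp := by field_simp at h1; linarith
    have e2 : x ^ 2 = y ^ 2 := by field_simp at h2; linarith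
    have hylow : -r < y := by
      have hAW : a1 ≤ W := by nlinarith
      have : a1 * r / W ≤ r := by
        rw [div_le_iff₀ hW]
        nlinarith
      linarith
    nlinarith [sq_nonneg (x - y), sq_nonneg (x + y), sq_nonneg y]
  set p := (Pf kp s).re with hpdef
  set q := (Pf kp s).im with hqdef
  have hp : 0 ≤ p := re_csqrt_nonneg _
  have hPP : Pf kp s * Pf kp s = z := csqrt_mul_self hzne
  have hre1 : p * p - q * q = z.re := by
    rw [← hPP]; simp [Complex.mul_re]; rfl
  have him1 : p * q + q * p = z.im := by
    rw [← hPP]; simp [Complex.mul_im]; rfl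
  rw [hzre] at hre1
  rw [hzim] at him1
  -- Q real and imaginary parts
  have hQ := Qf_eq kp hkp s
  have hQre : (Qf kp s).re = (x + y) / (2 * r) := by
    rw [hQ, Complex.div_ofReal_re, Complex.mul_re, Complex.sub_re, Complex.sub_im,
      Complex.one_re, Complex.one_im, Complex.I_re, Complex.I_im]
    rw [← hx, ← hyy, ← hrdef]
    ring
  have hQim : (Qf kp s).im = (y - x) / (2 * r) := by
    rw [hQ, Complex.div_ofReal_im, Complex.mul_im, Complex.sub_re, Complex.sub_im,
      Complex.one_re, Complex.one_im, Complex.I_re, Complex.I_im]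
    rw [← hx, ← hyy, ← hrdef]
    ring
  -- the two real conditions
  have E3 : a1 * q + a2 * ((y - x) / (2 * r)) = 0 := by
    have h := him
    simp only [Complex.add_im, Complex.mul_im, Complex.ofReal_re, Complex.ofReal_im,
      zero_mul, mul_zero, add_zero, zero_add] at h
    rw [hQim, ← hqdef] at h
    linarith
  have E4 : a0 + a1 * p + a2 * ((x + y) / (2 * r)) ≤ 0 := by
    have h := hre
    simp only [Complex.add_re, Complex.mul_re, Complex.ofReal_re, Complex.ofReal_im,
      zero_mul, mul_zero, sub_zero, zero_sub] at h
    rw [hQre, ← hpdef] at h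
    linarith
  -- clear denominators
  have hrne : r ≠ 0 := hr.ne'
  have e3 : 2 * r * a1 * q = a2 * (x - y) := by
    field_simp at E3
    linarith
  have e4 : 2 * r * a0 + 2 * r * a1 * p + a2 * (x + y) ≤ 0 := by
    have heq : 2 * r * a0 + 2 * r * a1 * p + a2 * (x + y)
        = (2 * r) * (a0 + a1 * p + a2 * ((x + y) / (2 * r))) := by
      field_simp
    rw [heq]
    have h2r : (0:ℝ) ≤ 2 * r := by linarith
    exact mul_nonpos_of_nonneg_of_nonpos h2r E4
  have e1 : kp * (p * p - q * q) = kp - x * y := by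
    rw [hre1]
    field_simp
  have e2 : 4 * kp * (p * q) = x ^ 2 - y ^ 2 := by
    have h := him1
    field_simp at h
    linarith
  exact real_contra kp a0 a1 a2 x y r W p q hkp ha0 ha1 ha2 hr hr2 hW hW2 hy1 hy2 hp e3 e4 e1 e2
end
end

section
/- Let k₊ > 0, θ_x ∈ (0, π/2), and define the steepest descent path D := {ζ ∈ ℂ : Re ζ = θ_x − sgn(Im ζ)·arccos(1/cosh(Im ζ))}, where sgn(0) := 0 (note arccos(1/cosh 0) = 0, so θ_x ∈ D). Then the restriction to ℝ of the function ζ(s) := 2·arcsin(Q(s)) + θ_x is a bijection from ℝ onto D; moreover ζ(0) = θ_x, Im ζ(s) < 0 for s > 0, and Im ζ(s) > 0 for s < 0. -/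
open Complex Set

noncomputable section

/-- Principal branch of arcsin on ℂ. -/
def arcsinC (w : ℂ) : ℂ := -Complex.I * Complex.log (Complex.I * w + csqrt (1 - w ^ 2))

def zetaF (kp θx : ℝ) (s : ℂ) : ℂ := 2 * arcsinC (Qf kp s) + (θx : ℂ)

/-- The steepest descent path through `θx`. -/
def descentPath (θx : ℝ) : Set ℂ :=
  {ζ : ℂ | ζ.re = θx - Real.sign ζ.im * Real.arccos (1 / Real.cosh ζ.im)}

namespace Aux16

/-- sinh of twice the inverse parameter. -/
def Sf (t : ℝ) : ℝ := -(Real.sqrt 2) * t * Real.sqrt (t ^ 2 + Real.sqrt (1 + t ^ 4))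

def yOf (t : ℝ) : ℝ := Real.arsinh (Sf t) / 2

def xOf (t : ℝ) : ℝ := Real.arctan (-Real.tanh (yOf t))

lemma a_pos (t : ℝ) : 0 < t ^ 2 + Real.sqrt (1 + t ^ 4) := by positivity

lemma sqrt2_sq : Real.sqrt 2 ^ 2 = 2 := Real.sq_sqrt (by norm_num)

lemma sq_S (t : ℝ) : Sf t ^ 2 = 2 * t ^ 2 * (t ^ 2 + Real.sqrt (1 + t ^ 4)) := by
  have h2 : Real.sqrt (t ^ 2 + Real.sqrt (1 + t ^ 4)) ^ 2 = t ^ 2 + Real.sqrt (1 + t ^ 4) :=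
    Real.sq_sqrt (a_pos t).le
  unfold Sf
  rw [show (-(Real.sqrt 2) * t * Real.sqrt (t ^ 2 + Real.sqrt (1 + t ^ 4))) ^ 2
      = Real.sqrt 2 ^ 2 * t ^ 2 * Real.sqrt (t ^ 2 + Real.sqrt (1 + t ^ 4)) ^ 2 from by ring,
    sqrt2_sq, h2]

lemma cosh_two_yOf (t : ℝ) : Real.cosh (2 * yOf t) = t ^ 2 + Real.sqrt (1 + t ^ 4) := by
  have h2y : 2 * yOf t = Real.arsinh (Sf t) := by unfold yOf; ring
  rw [h2y, Real.cosh_arsinh]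
  have h1 : Real.sqrt (1 + t ^ 4) ^ 2 = 1 + t ^ 4 := Real.sq_sqrt (by positivity)
  have key : 1 + Sf t ^ 2 = (t ^ 2 + Real.sqrt (1 + t ^ 4)) ^ 2 := by
    rw [sq_S]; linear_combination -h1
  rw [key, Real.sqrt_sq (a_pos t).le]

lemma sinh_two_yOf (t : ℝ) : Real.sinh (2 * yOf t) = Sf t := by
  have h2y : 2 * yOf t = Real.arsinh (Sf t) := by unfold yOf; ring
  rw [h2y, Real.sinh_arsinh]

lemma sqrt_one_add_tanh_sq (y : ℝ) :
    Real.sqrt (1 + Real.tanh y ^ 2) = Real.sqrt (Real.cosh (2 * y)) / Real.cosh y := by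
  have hc : (0:ℝ) < Real.cosh y := Real.cosh_pos y
  have h : 1 + Real.tanh y ^ 2 = Real.cosh (2 * y) / Real.cosh y ^ 2 := by
    rw [Real.tanh_eq_sinh_div_cosh, Real.cosh_two_mul, div_pow]
    field_simp
  rw [h, Real.sqrt_div' _ (by positivity), Real.sqrt_sq hc.le]

lemma sin_xOf (t : ℝ) :
    Real.sin (xOf t) = -Real.sinh (yOf t) / Real.sqrt (Real.cosh (2 * yOf t)) := by
  have hc : (0:ℝ) < Real.cosh (yOf t) := Real.cosh_pos (yOf t)
  have hc2 : (0:ℝ) < Real.sqrt (Real.cosh (2 * yOf t)) :=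
    Real.sqrt_pos.mpr (Real.cosh_pos (2 * yOf t))
  unfold xOf
  rw [Real.sin_arctan, neg_sq, sqrt_one_add_tanh_sq (yOf t),
    Real.tanh_eq_sinh_div_cosh]
  field_simp

lemma cos_xOf (t : ℝ) :
    Real.cos (xOf t) = Real.cosh (yOf t) / Real.sqrt (Real.cosh (2 * yOf t)) := by
  have hc : (0:ℝ) < Real.cosh (yOf t) := Real.cosh_pos (yOf t)
  have hc2 : (0:ℝ) < Real.sqrt (Real.cosh (2 * yOf t)) :=
    Real.sqrt_pos.mpr (Real.cosh_pos (2 * yOf t))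
  unfold xOf
  rw [Real.cos_arctan, neg_sq, sqrt_one_add_tanh_sq (yOf t)]
  field_simp

lemma A1 (t : ℝ) : Real.sqrt 2 * Real.sin (xOf t) * Real.cosh (yOf t) = t := by
  have hsc : Real.sinh (yOf t) * Real.cosh (yOf t) = Sf t / 2 := by
    have h := Real.sinh_two_mul (yOf t)
    rw [sinh_two_yOf] at h
    linarith
  have hsa : (0:ℝ) < Real.sqrt (t ^ 2 + Real.sqrt (1 + t ^ 4)) := Real.sqrt_pos.mpr (a_pos t)
  have hsa2 : Real.sqrt (t ^ 2 + Real.sqrt (1 + t ^ 4)) ^ 2 = t ^ 2 + Real.sqrt (1 + t ^ 4) :=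
    Real.sq_sqrt (a_pos t).le
  unfold Sf at hsc
  rw [sin_xOf, cosh_two_yOf]
  field_simp
  linear_combination (-(Real.sqrt 2)) * hsc
    + (t * Real.sqrt (t ^ 2 + Real.sqrt (1 + t ^ 4)) / 2) * sqrt2_sq

lemma A2 (t : ℝ) : Real.sqrt 2 * Real.cos (xOf t) * Real.sinh (yOf t) = -t := by
  have hsc : Real.sinh (yOf t) * Real.cosh (yOf t) = Sf t / 2 := by
    have h := Real.sinh_two_mul (yOf t)
    rw [sinh_two_yOf] at h
    linarith
  have hsa : (0:ℝ) < Real.sqrt (t ^ 2 + Real.sqrt (1 + t ^ 4)) := Real.sqrt_pos.mpr (a_pos t)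
  have hsa2 : Real.sqrt (t ^ 2 + Real.sqrt (1 + t ^ 4)) ^ 2 = t ^ 2 + Real.sqrt (1 + t ^ 4) :=
    Real.sq_sqrt (a_pos t).le
  unfold Sf at hsc
  rw [cos_xOf, cosh_two_yOf]
  field_simp
  linear_combination (Real.sqrt 2) * hsc
    + (-(t * Real.sqrt (t ^ 2 + Real.sqrt (1 + t ^ 4))) / 2) * sqrt2_sq

def cOf (kp : ℝ) : ℝ := (Real.sqrt (2 * kp))⁻¹

lemma abs_tanh_lt_one (y : ℝ) : |Real.tanh y| < 1 := by
  rw [Real.tanh_eq_sinh_div_cosh, abs_div, abs_of_pos (Real.cosh_pos y),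
    div_lt_one (Real.cosh_pos y)]
  nlinarith [Real.cosh_sq y, _root_.sq_abs (Real.sinh y), abs_nonneg (Real.sinh y), Real.cosh_pos y]

lemma xOf_lt (t : ℝ) : |xOf t| < Real.pi / 4 := by
  have h := abs_lt.mp (abs_tanh_lt_one (yOf t))
  unfold xOf
  rw [abs_lt]
  constructor
  · have := Real.arctan_strictMono (show (-1:ℝ) < -Real.tanh (yOf t) by linarith)
    rw [Real.arctan_neg, Real.arctan_one] at this
    linarith
  · have := Real.arctan_strictMono (show -Real.tanh (yOf t) < 1 by linarith)
    rw [Real.arctan_one] at this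
    linarith

lemma hexp : Complex.exp (-(Real.pi : ℂ) / 4 * Complex.I)
    = ((Real.sqrt 2 / 2 : ℝ) : ℂ) * (1 - Complex.I) := by
  rw [show (-(Real.pi : ℂ) / 4 * Complex.I) = ((-(Real.pi / 4) : ℝ) : ℂ) * Complex.I by
    push_cast; ring]
  rw [Complex.exp_mul_I, ← Complex.ofReal_cos, ← Complex.ofReal_sin,
    Real.cos_neg, Real.sin_neg, Real.cos_pi_div_four, Real.sin_pi_div_four]
  push_cast
  ring

lemma sin_formula (t : ℝ) :
    Complex.sin ((xOf t : ℂ) + (yOf t : ℂ) * Complex.I)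
      = (t : ℂ) * Complex.exp (-(Real.pi : ℂ) / 4 * Complex.I) := by
  have h1 := A1 t
  have h2 := A2 t
  rw [hexp, Complex.sin_add, Complex.cos_mul_I, Complex.sin_mul_I,
    ← Complex.ofReal_sin, ← Complex.ofReal_cos, ← Complex.ofReal_cosh, ← Complex.ofReal_sinh]
  refine Complex.ext ?_ ?_
  · simp [Complex.sin_ofReal_re, Complex.cos_ofReal_re, Complex.sinh_ofReal_re,
      Complex.cosh_ofReal_re]
    linear_combination (Real.sqrt 2 / 2) * h1
      + (-(Real.sin (xOf t) * Real.cosh (yOf t)) / 2) * sqrt2_sq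
  · simp [Complex.sin_ofReal_re, Complex.cos_ofReal_re, Complex.sinh_ofReal_re,
      Complex.cosh_ofReal_re]
    linear_combination (Real.sqrt 2 / 2) * h2
      + (-(Real.cos (xOf t) * Real.sinh (yOf t)) / 2) * sqrt2_sq

lemma csqrt_sq {v : ℂ} (hv : 0 < v.re) : csqrt (v ^ 2) = v := by
  have h := Complex.sq_cpow_two_inv hv
  rw [csqrt, show (1/2 : ℂ) = (2 : ℂ)⁻¹ by norm_num]
  exact_mod_cast h

lemma arcsin_sin (x y : ℝ) (hx : |x| < Real.pi / 4) :
    arcsinC (Complex.sin ((x : ℂ) + (y : ℂ) * Complex.I)) = (x : ℂ) + (y : ℂ) * Complex.I := by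
  have hpi := Real.pi_pos
  have hx' : |x| < Real.pi / 2 := hx.trans (by linarith)
  have habs := abs_lt.mp hx'
  set ζ : ℂ := (x : ℂ) + (y : ℂ) * Complex.I with hζ
  have hcos : 0 < (Complex.cos ζ).re := by
    have hc : Complex.cos ζ = ((Real.cos x : ℝ) : ℂ) * ((Real.cosh y : ℝ) : ℂ)
        - ((Real.sin x : ℝ) : ℂ) * (((Real.sinh y : ℝ) : ℂ) * Complex.I) := by
      rw [hζ, Complex.cos_add, Complex.cos_mul_I, Complex.sin_mul_I,
        ← Complex.ofReal_sin, ← Complex.ofReal_cos, ← Complex.ofReal_cosh,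
        ← Complex.ofReal_sinh]
    rw [hc]
    simp only [Complex.sub_re, Complex.mul_re, Complex.ofReal_re, Complex.ofReal_im,
      Complex.mul_im, Complex.I_re, Complex.I_im]
    have := mul_pos (Real.cos_pos_of_mem_Ioo ⟨habs.1, habs.2⟩) (Real.cosh_pos y)
    ring_nf
    nlinarith [this]
  have h1 : 1 - Complex.sin ζ ^ 2 = Complex.cos ζ ^ 2 := by
    linear_combination -(Complex.sin_sq_add_cos_sq ζ)
  unfold arcsinC
  rw [h1, csqrt_sq hcos,
    show Complex.I * Complex.sin ζ + Complex.cos ζ = Complex.exp (ζ * Complex.I) from by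
      rw [Complex.exp_mul_I]; ring]
  have him : (ζ * Complex.I).im = x := by simp [hζ]
  rw [Complex.log_exp (by rw [him]; linarith) (by rw [him]; linarith)]
  linear_combination (-ζ) * Complex.I_mul_I

lemma zeta_eq (kp θx : ℝ) (hkp : 0 < kp) (s : ℝ) :
    zetaF kp θx (s : ℂ)
      = 2 * ((xOf (cOf kp * s) : ℂ) + (yOf (cOf kp * s) : ℂ) * Complex.I) + (θx : ℂ) := by
  have hQ : Qf kp (s : ℂ)
      = ((cOf kp * s : ℝ) : ℂ) * Complex.exp (-(Real.pi : ℂ) / 4 * Complex.I) := by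
    unfold Qf cOf
    push_cast
    ring
  unfold zetaF
  rw [hQ, ← sin_formula, arcsin_sin _ _ (xOf_lt _)]

lemma zeta_re (kp θx : ℝ) (hkp : 0 < kp) (s : ℝ) :
    (zetaF kp θx (s : ℂ)).re = θx + 2 * xOf (cOf kp * s) := by
  rw [zeta_eq kp θx hkp s]; simp; ring

lemma zeta_im (kp θx : ℝ) (hkp : 0 < kp) (s : ℝ) :
    (zetaF kp θx (s : ℂ)).im = 2 * yOf (cOf kp * s) := by
  rw [zeta_eq kp θx hkp s]; simp

lemma arccos_eq (y : ℝ) (hy : 0 ≤ y) :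
    Real.arccos (1 / Real.cosh (2 * y)) = 2 * Real.arctan (Real.tanh y) := by
  have hc := Real.cosh_pos y
  have hsq := Real.cosh_sq y
  have key : Real.cos (2 * Real.arctan (Real.tanh y)) = 1 / Real.cosh (2 * y) := by
    rw [Real.cos_two_mul, Real.cos_arctan]
    have h2 : Real.sqrt (1 + Real.tanh y ^ 2) ^ 2 = 1 + Real.tanh y ^ 2 :=
      Real.sq_sqrt (by positivity)
    rw [div_pow, one_pow, h2, Real.tanh_eq_sinh_div_cosh, Real.cosh_two_mul]
    have hc2 : (0:ℝ) < Real.cosh y ^ 2 + Real.sinh y ^ 2 := by positivity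
    field_simp
    ring_nf
    nlinarith [hsq]
  rw [← key, Real.arccos_cos ?_ ?_]
  · have h1 : 0 ≤ Real.tanh y := by
      rw [Real.tanh_eq_sinh_div_cosh]
      exact div_nonneg (Real.sinh_nonneg_iff.mpr hy) hc.le
    have h2 : Real.arctan 0 ≤ Real.arctan (Real.tanh y) := Real.arctan_strictMono.monotone h1
    rw [Real.arctan_zero] at h2
    linarith
  · linarith [Real.arctan_lt_pi_div_two (Real.tanh y), Real.pi_pos]

lemma relF (y : ℝ) :
    2 * Real.arctan (-(Real.tanh y))
      = -(Real.sign (2 * y) * Real.arccos (1 / Real.cosh (2 * y))) := by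
  rcases lt_trichotomy y 0 with h | h | h
  · have hs : Real.sign (2 * y) = -1 := Real.sign_of_neg (by linarith)
    have ha := arccos_eq (-y) (by linarith)
    rw [show 2 * -y = -(2 * y) by ring, Real.cosh_neg, Real.tanh_neg, Real.arctan_neg] at ha
    rw [hs, ha, Real.arctan_neg]
    ring
  · rw [h]
    simp [Real.sign_zero]
  · have hs : Real.sign (2 * y) = 1 := Real.sign_of_pos (by linarith)
    rw [hs, one_mul, arccos_eq y h.le, Real.arctan_neg]
    ring

lemma mem_path (kp θx : ℝ) (hkp : 0 < kp) (s : ℝ) :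
    zetaF kp θx (s : ℂ) ∈ descentPath θx := by
  show (zetaF kp θx (s : ℂ)).re
    = θx - Real.sign (zetaF kp θx (s : ℂ)).im
        * Real.arccos (1 / Real.cosh (zetaF kp θx (s : ℂ)).im)
  rw [zeta_re kp θx hkp s, zeta_im kp θx hkp s]
  have h := relF (yOf (cOf kp * s))
  unfold xOf
  linarith

lemma Sf_inv (Y : ℝ) :
    Sf (-(Real.sinh Y) / (Real.sqrt 2 * Real.sqrt (Real.cosh Y))) = Real.sinh Y := by
  have hch : (0:ℝ) < Real.cosh Y := Real.cosh_pos Y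
  have hsqc : Real.sqrt (Real.cosh Y) ^ 2 = Real.cosh Y := Real.sq_sqrt hch.le
  have hsqc0 : (0:ℝ) < Real.sqrt (Real.cosh Y) := Real.sqrt_pos.mpr hch
  have hsq2 : (0:ℝ) < Real.sqrt 2 := Real.sqrt_pos.mpr (by norm_num)
  have hsq : Real.cosh Y ^ 2 = Real.sinh Y ^ 2 + 1 := Real.cosh_sq Y
  set t := -(Real.sinh Y) / (Real.sqrt 2 * Real.sqrt (Real.cosh Y)) with ht
  have ht2 : t ^ 2 = Real.sinh Y ^ 2 / (2 * Real.cosh Y) := by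
    rw [ht, div_pow, neg_sq, mul_pow, sqrt2_sq, hsqc]
  have h14 : 1 + t ^ 4 = ((Real.sinh Y ^ 2 + 2) / (2 * Real.cosh Y)) ^ 2 := by
    rw [show t ^ 4 = (t ^ 2) ^ 2 by ring, ht2]
    field_simp
    linear_combination 4 * hsq
  have hs14 : Real.sqrt (1 + t ^ 4) = (Real.sinh Y ^ 2 + 2) / (2 * Real.cosh Y) := by
    rw [h14, Real.sqrt_sq (by positivity)]
  have hsum : t ^ 2 + Real.sqrt (1 + t ^ 4) = Real.cosh Y := by
    rw [ht2, hs14]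
    field_simp
    linarith [hsq]
  unfold Sf
  rw [hsum, ht]
  field_simp

lemma Sf_zero : Sf 0 = 0 := by unfold Sf; ring

lemma yOf_zero : yOf 0 = 0 := by unfold yOf; rw [Sf_zero, Real.arsinh_zero]; norm_num

lemma xOf_zero : xOf 0 = 0 := by unfold xOf; rw [yOf_zero]; simp

lemma yOf_neg_of_pos {t : ℝ} (ht : 0 < t) : yOf t < 0 := by
  have hS : Sf t < 0 := by
    have h1 : (0:ℝ) < Real.sqrt (t ^ 2 + Real.sqrt (1 + t ^ 4)) := Real.sqrt_pos.mpr (a_pos t)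
    have h2 : (0:ℝ) < Real.sqrt 2 := Real.sqrt_pos.mpr (by norm_num)
    unfold Sf
    nlinarith [mul_pos (mul_pos h2 ht) h1]
  have : Real.arsinh (Sf t) < Real.arsinh 0 := Real.arsinh_lt_arsinh.mpr hS
  rw [Real.arsinh_zero] at this
  unfold yOf
  linarith

lemma yOf_pos_of_neg {t : ℝ} (ht : t < 0) : 0 < yOf t := by
  have hS : 0 < Sf t := by
    have h1 : (0:ℝ) < Real.sqrt (t ^ 2 + Real.sqrt (1 + t ^ 4)) := Real.sqrt_pos.mpr (a_pos t)
    have h2 : (0:ℝ) < Real.sqrt 2 := Real.sqrt_pos.mpr (by norm_num)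
    unfold Sf
    nlinarith [mul_pos (mul_pos h2 (neg_pos.mpr ht)) h1]
  have : Real.arsinh 0 < Real.arsinh (Sf t) := Real.arsinh_lt_arsinh.mpr hS
  rw [Real.arsinh_zero] at this
  unfold yOf
  linarith

end Aux16

open Aux16

theorem statement16 (kp θx : ℝ) (hkp : 0 < kp) (hθ : θx ∈ Set.Ioo 0 (Real.pi / 2)) :
    Set.BijOn (fun s : ℝ => zetaF kp θx (s : ℂ)) Set.univ (descentPath θx) ∧
    zetaF kp θx 0 = (θx : ℂ) ∧
    (∀ s : ℝ, 0 < s → (zetaF kp θx (s : ℂ)).im < 0) ∧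
    (∀ s : ℝ, s < 0 → 0 < (zetaF kp θx (s : ℂ)).im) := by
  have hsqkp : (0:ℝ) < Real.sqrt (2 * kp) := Real.sqrt_pos.mpr (by linarith)
  have hc : 0 < cOf kp := inv_pos.mpr hsqkp
  refine ⟨⟨fun s _ => mem_path kp θx hkp s, ?_, ?_⟩, ?_, ?_, ?_⟩
  · -- InjOn
    intro s₁ _ s₂ _ h
    simp only at h
    have him : yOf (cOf kp * s₁) = yOf (cOf kp * s₂) := by
      have h' := congrArg Complex.im h
      rw [zeta_im kp θx hkp s₁, zeta_im kp θx hkp s₂] at h'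
      linarith
    have hx : xOf (cOf kp * s₁) = xOf (cOf kp * s₂) := by unfold xOf; rw [him]
    have ht : cOf kp * s₁ = cOf kp * s₂ := by
      rw [← A1 (cOf kp * s₁), ← A1 (cOf kp * s₂), hx, him]
    exact mul_left_cancel₀ hc.ne' ht
  · -- SurjOn
    intro ζ hζ
    set t₀ := -(Real.sinh ζ.im) / (Real.sqrt 2 * Real.sqrt (Real.cosh ζ.im)) with ht0
    refine ⟨Real.sqrt (2 * kp) * t₀, Set.mem_univ _, ?_⟩
    have hct : cOf kp * (Real.sqrt (2 * kp) * t₀) = t₀ := by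
      unfold cOf
      field_simp
    have hy : yOf t₀ = ζ.im / 2 := by
      unfold yOf
      rw [ht0, Sf_inv, Real.arsinh_sinh]
    have him : (zetaF kp θx ((Real.sqrt (2 * kp) * t₀ : ℝ) : ℂ)).im = ζ.im := by
      rw [zeta_im kp θx hkp _, hct, hy]
      ring
    have hmem := mem_path kp θx hkp (Real.sqrt (2 * kp) * t₀)
    have hre : (zetaF kp θx ((Real.sqrt (2 * kp) * t₀ : ℝ) : ℂ)).re = ζ.re := by
      have h1 : (zetaF kp θx ((Real.sqrt (2 * kp) * t₀ : ℝ) : ℂ)).re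
          = θx - Real.sign (zetaF kp θx ((Real.sqrt (2 * kp) * t₀ : ℝ) : ℂ)).im
              * Real.arccos (1 / Real.cosh (zetaF kp θx ((Real.sqrt (2 * kp) * t₀ : ℝ) : ℂ)).im) :=
        hmem
      rw [him] at h1
      have h2 : ζ.re = θx - Real.sign ζ.im * Real.arccos (1 / Real.cosh ζ.im) := hζ
      rw [h1, ← h2]
    exact Complex.ext hre him
  · -- value at 0
    rw [show (0:ℂ) = ((0:ℝ):ℂ) by norm_num, zeta_eq kp θx hkp 0, mul_zero, xOf_zero, yOf_zero]
    simp
  · intro s hs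
    rw [zeta_im kp θx hkp s]
    have := yOf_neg_of_pos (mul_pos hc hs)
    linarith
  · intro s hs
    rw [zeta_im kp θx hkp s]
    have : cOf kp * s < 0 := mul_neg_of_pos_of_neg hc hs
    have := yOf_pos_of_neg this
    linarith
end
end
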